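/- There exist a constant c > 0 and a size-indexing Sperner family (Q_m)_{m ∈ ℕ} whose alphabet size grows only as the cube of the inverse-Ackermann function: for every m ∈ ℕ, the multiset Q_m has exactly m elements, every element of Q_m lies in {1, …, ⌈c · α⁻¹(m)³⌉}, and for all m ≠ m' the multiset Q_m is not a sub-multiset of Q_{m'}. -/
import Mathlib


/-- The Ackermann-like hierarchy from the paper: `A r 1 = 2` for all `r ≥ 1`,
`A 1 t = 2 * t` for `t ≥ 2`, and `A (r+1) t = A r (A (r+1) (t-1))` for `t ≥ 2`.
(The values at `t = 0` and `r = 0` are junk values, never used for `r, t ≥ 1`.) -/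
def A : ℕ → ℕ → ℕ
  | _, 0 => 0
  | _, 1 => 2
  | 0, t + 2 => 2 * (t + 2)
  | 1, t + 2 => 2 * (t + 2)
  | r + 2, t + 2 => A (r + 1) (A (r + 2) (t + 1))

/-- The Ackermann function `α(t) = A_t(t)`. -/
def ackFn (t : ℕ) : ℕ := A t t

/-- The inverse-Ackermann function: the smallest `t` such that `n ≤ α(t)`. -/
noncomputable def invAck (n : ℕ) : ℕ := sInf {t | n ≤ ackFn t}

lemma A_zero (r : ℕ) : A r 0 = 0 := by simp [A]

lemma A_one (r : ℕ) : A r 1 = 2 := by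
  match r with
  | 0 => simp [A]
  | 1 => simp [A]
  | r+2 => simp [A]

lemma A_succ_succ (r t : ℕ) : A (r+2) (t+2) = A (r+1) (A (r+2) (t+1)) := by rw [A]

lemma A_zero_left (t : ℕ) (ht : 1 ≤ t) : A 0 t = 2 * t := by
  match t, ht with
  | 1, _ => simp [A]
  | t+2, _ => simp [A]

lemma A_one_left (t : ℕ) (ht : 1 ≤ t) : A 1 t = 2 * t := by
  match t, ht with
  | 1, _ => simp [A]
  | t+2, _ => simp [A]

lemma two_mul_le_A : ∀ r t, 1 ≤ t → 2 * t ≤ A r t := by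
  intro r
  induction r with
  | zero =>
    intro t ht
    rw [A_zero_left t ht]
  | succ r ih =>
    intro t
    induction t using Nat.strong_induction_on with
    | _ t iht =>
      intro ht
      match t, ht with
      | 1, _ => simp [A_one]
      | t+2, _ =>
        match r with
        | 0 => simp [A]
        | r'+1 =>
          have h1 : 2 * (t+1) ≤ A (r'+2) (t+1) := iht (t+1) (by omega) (by omega)
          have h2 : 2 * A (r'+2) (t+1) ≤ A (r'+1) (A (r'+2) (t+1)) := ih _ (by omega)
          rw [A_succ_succ]
          omega

lemma A_mono_succ (r t : ℕ) (ht : 1 ≤ t) : A r t ≤ A r (t+1) := by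
  match r with
  | 0 => rw [A_zero_left t ht, A_zero_left (t+1) (by omega)]; omega
  | 1 => rw [A_one_left t ht, A_one_left (t+1) (by omega)]; omega
  | r+2 =>
    match t, ht with
    | t+1, _ =>
      have hX : 2 * (t+1) ≤ A (r+2) (t+1) := two_mul_le_A _ _ (by omega)
      have h2 : 2 * A (r+2) (t+1) ≤ A (r+1) (A (r+2) (t+1)) := two_mul_le_A _ _ (by omega)
      rw [A_succ_succ]
      omega

lemma A_mono (r a b : ℕ) (ha : 1 ≤ a) (hab : a ≤ b) : A r a ≤ A r b := by
  induction b with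
  | zero => omega
  | succ b ih =>
    rcases Nat.lt_or_ge a (b+1) with h | h
    · exact le_trans (ih (by omega)) (A_mono_succ r b (by omega))
    · have : a = b + 1 := by omega
      subst this; rfl

lemma A_mono_left (r t : ℕ) (ht : 1 ≤ t) : A r t ≤ A (r+1) t := by
  match t, ht with
  | 1, _ => rw [A_one, A_one]
  | t+2, _ =>
    match r with
    | 0 => simp [A]
    | r+1 =>
      rw [A_succ_succ]
      have hX : 2 * (t+1) ≤ A (r+2) (t+1) := two_mul_le_A _ _ (by omega)
      exact A_mono (r+1) (t+2) (A (r+2) (t+1)) (by omega) (by omega)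

lemma ackFn_zero : ackFn 0 = 0 := A_zero 0

lemma self_le_ackFn (t : ℕ) (ht : 1 ≤ t) : t ≤ ackFn t :=
  le_trans (by omega) (two_mul_le_A t t ht)

-- ===== the families =====

def Efun (g : ℕ → ℕ) : ℕ → ℕ → ℕ
  | 0, a => g a
  | k+1, a => Efun g k (g a + 2)

def gfun : ℕ → ℕ → ℕ
  | 0, a => 2 * a
  | j+1, a => Efun (gfun j) (a - 1) 1

def GoodFam (o n m M : ℕ) (F : ℕ → Multiset ℕ) : Prop :=
  (∀ s, m ≤ s → s ≤ M → (F s).card = s ∧ ∀ x ∈ F s, o < x ∧ x ≤ o + n) ∧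
  (∀ s s', m ≤ s → s < s' → s' ≤ M → ¬ F s ≤ F s')

lemma baseFam (o m : ℕ) (_hm : 1 ≤ m) :
    ∃ F, GoodFam o 2 m (2 * m) F := by
  refine ⟨fun s => Multiset.replicate (2*m - s) (o+1) + Multiset.replicate (2*(s-m)) (o+2),
    ?_, ?_⟩
  · intro s hs hs2
    refine ⟨?_, ?_⟩
    · simp only [Multiset.card_add, Multiset.card_replicate]; omega
    · intro x hx
      rcases Multiset.mem_add.1 hx with h | h
      · have := Multiset.eq_of_mem_replicate h; omega
      · have := Multiset.eq_of_mem_replicate h; omega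
  · intro s s' hs hss hs' hle
    have h1 := Multiset.count_le_of_le (o+1) hle
    simp only [Multiset.count_add, Multiset.count_replicate] at h1
    split_ifs at h1 <;> omega

lemma iterStep (o n : ℕ) (g : ℕ → ℕ)
    (hg : ∀ a, 1 ≤ a → ∃ F, GoodFam (o+1) n a (g a) F) :
    ∀ k a, 1 ≤ a → ∃ F, GoodFam o (n+1) (a + k) (Efun g k a) F ∧
      ∀ s, a + k ≤ s → s ≤ Efun g k a → (F s).count (o+1) ≤ k := by
  intro k
  induction k with
  | zero =>
    intro a ha
    obtain ⟨F, hF⟩ := hg a ha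
    have hw : ∀ s, a ≤ s → s ≤ g a → ∀ x ∈ F s, o + 1 < x ∧ x ≤ o + 1 + n :=
      fun s h1 h2 => (hF.1 s h1 h2).2
    refine ⟨F, ⟨?_, ?_⟩, ?_⟩
    · intro s h1 h2
      simp only [Efun] at h2
      exact ⟨(hF.1 s (by omega) h2).1, fun x hx => by
        have := hw s (by omega) h2 x hx; omega⟩
    · intro s s' h1 h2 h3
      simp only [Efun] at h3
      exact hF.2 s s' (by omega) h2 h3
    · intro s h1 h2
      simp only [Efun] at h2
      refine le_of_eq (Multiset.count_eq_zero.2 fun hmem => ?_)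
      have := hw s (by omega) h2 _ hmem; omega
  | succ k ih =>
    intro a ha
    obtain ⟨F1, hF1⟩ := hg a ha
    obtain ⟨F2, hF2, hc2⟩ := ih (g a + 2) (by omega)
    have hE : Efun g (k+1) a = Efun g k (g a + 2) := by rw [Efun]
    have hz : ∀ u, a ≤ u → u ≤ g a → Multiset.count (o+1) (F1 u) = 0 := by
      intro u h1 h2
      refine Multiset.count_eq_zero.2 fun hmem => ?_
      have := (hF1.1 u h1 h2).2 _ hmem; omega
    refine ⟨fun s => if s ≤ g a + (k+1) then
        F1 (s - (k+1)) + Multiset.replicate (k+1) (o+1) else F2 s, ⟨?_, ?_⟩, ?_⟩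
    · intro s h1 h2
      rw [hE] at h2
      dsimp only
      by_cases hs : s ≤ g a + (k+1)
      · rw [if_pos hs]
        obtain ⟨hc, hw⟩ := hF1.1 (s - (k+1)) (by omega) (by omega)
        refine ⟨?_, ?_⟩
        · simp only [Multiset.card_add, Multiset.card_replicate, hc]; omega
        · intro x hx
          rcases Multiset.mem_add.1 hx with h | h
          · have := hw x h; omega
          · have := Multiset.eq_of_mem_replicate h; omega
      · rw [if_neg hs]
        obtain ⟨hc, hw⟩ := hF2.1 s (by omega) h2
        exact ⟨hc, fun x hx => by have := hw x hx; omega⟩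
    · intro s s' h1 h2 h3 hle
      rw [hE] at h3
      dsimp only at hle
      by_cases hs : s ≤ g a + (k+1) <;> by_cases hs' : s' ≤ g a + (k+1)
      · rw [if_pos hs, if_pos hs'] at hle
        have hface : F1 (s - (k+1)) ≤ F1 (s' - (k+1)) := by
          rw [Multiset.le_iff_count]
          intro x
          have := Multiset.count_le_of_le x hle
          simp only [Multiset.count_add] at this
          omega
        exact hF1.2 (s - (k+1)) (s' - (k+1)) (by omega) (by omega) (by omega) hface
      · rw [if_pos hs, if_neg hs'] at hle
        have hcnt := Multiset.count_le_of_le (o+1) hle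
        simp only [Multiset.count_add, Multiset.count_replicate_self,
          hz (s - (k+1)) (by omega) (by omega)] at hcnt
        have := hc2 s' (by omega) h3
        omega
      · omega
      · rw [if_neg hs, if_neg hs'] at hle
        exact hF2.2 s s' (by omega) h2 h3 hle
    · intro s h1 h2
      rw [hE] at h2
      dsimp only
      by_cases hs : s ≤ g a + (k+1)
      · rw [if_pos hs]
        simp only [Multiset.count_add, Multiset.count_replicate_self,
          hz (s - (k+1)) (by omega) (by omega)]
        omega
      · rw [if_neg hs]
        exact le_trans (hc2 s (by omega) h2) (by omega)

lemma levelFam : ∀ j o a, 1 ≤ a → ∃ F, GoodFam o (j+2) a (gfun j a) F := by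
  intro j
  induction j with
  | zero =>
    intro o a ha
    obtain ⟨F, hF⟩ := baseFam o a ha
    exact ⟨F, by simpa [gfun] using hF⟩
  | succ j ih =>
    intro o a ha
    obtain ⟨F, hF, _⟩ := iterStep o (j+2) (gfun j) (fun b hb => ih (o+1) b hb) (a-1) 1 le_rfl
    have h1 : 1 + (a-1) = a := by omega
    rw [h1] at hF
    have h2 : gfun (j+1) a = Efun (gfun j) (a-1) 1 := by rw [gfun]
    rw [h2]
    exact ⟨F, hF⟩

-- ===== growth of gfun =====

lemma Efun_ge (g : ℕ → ℕ) (hg : ∀ y, y ≤ g y) : ∀ k a, a + k ≤ Efun g k a := by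
  intro k
  induction k with
  | zero => intro a; simpa [Efun] using hg a
  | succ k ih =>
    intro a
    rw [Efun]
    have := ih (g a + 2)
    have := hg a
    omega

lemma le_gfun : ∀ j a, a ≤ gfun j a := by
  intro j
  induction j with
  | zero => intro a; simp [gfun]; omega
  | succ j ih =>
    intro a
    have h2 : gfun (j+1) a = Efun (gfun j) (a-1) 1 := by rw [gfun]
    rw [h2]
    have := Efun_ge (gfun j) ih (a-1) 1
    omega

lemma Efun_mono (g : ℕ → ℕ) (hg : Monotone g) : ∀ k, Monotone (Efun g k) := by
  intro k
  induction k with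
  | zero => intro a b hab; simpa [Efun] using hg hab
  | succ k ih =>
    intro a b hab
    rw [Efun, Efun]
    exact ih (by have := hg hab; omega)

lemma Efun_mono_k (g : ℕ → ℕ) (hg : Monotone g) (hg1 : ∀ y, y ≤ g y) :
    ∀ k k', k ≤ k' → Efun g k 1 ≤ Efun g k' 1 := by
  intro k k' h
  induction k' with
  | zero => have hk : k = 0 := by omega
            subst hk; rfl
  | succ k' ih =>
    rcases Nat.lt_or_ge k (k'+1) with hlt | hge
    · refine le_trans (ih (by omega)) ?_
      have he : Efun g (k'+1) 1 = Efun g k' (g 1 + 2) := by rw [Efun]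
      rw [he]
      exact Efun_mono g hg k' (by have := hg1 1; omega)
    · have hk : k = k' + 1 := by omega
      subst hk; rfl

lemma gfun_mono : ∀ j, Monotone (gfun j) := by
  intro j
  induction j with
  | zero => intro a b hab; simp [gfun]; omega
  | succ j ih =>
    intro a b hab
    have h2 : ∀ x, gfun (j+1) x = Efun (gfun j) (x-1) 1 := fun x => by rw [gfun]
    rw [h2, h2]
    exact Efun_mono_k (gfun j) ih (le_gfun j) (a-1) (b-1) (by omega)

lemma Efun_eq_iter (g : ℕ → ℕ) : ∀ k a, Efun g k a = g ((fun x => g x + 2)^[k] a) := by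
  intro k
  induction k with
  | zero => intro a; simp [Efun]
  | succ k ih =>
    intro a
    rw [Efun, ih, Function.iterate_succ_apply]

lemma A_eq_iter (j : ℕ) : ∀ k, A (j+2) (k+1) = (A (j+1))^[k] 2 := by
  intro k
  induction k with
  | zero => simp [A_one]
  | succ k ih =>
    rw [A_succ_succ, ih, Function.iterate_succ_apply']

lemma gfun_ge_A : ∀ j a, 1 ≤ a → A (j+1) a ≤ gfun j a := by
  intro j
  induction j with
  | zero =>
    intro a ha
    rw [A_one_left a ha]
    simp [gfun]
  | succ j ih =>
    intro a ha
    set h : ℕ → ℕ := A (j+1) with hh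
    set q : ℕ → ℕ := fun x => gfun j x + 2 with hq
    have hiter1 : ∀ k, 1 ≤ h^[k] 1 := by
      intro k
      induction k with
      | zero => simp
      | succ k ihk2 =>
        rw [Function.iterate_succ_apply']
        have := two_mul_le_A (j+1) (h^[k] 1) ihk2
        simp only [hh] at *
        omega
    have key : ∀ k, 1 ≤ q^[k] 1 ∧ h^[k] 1 ≤ q^[k] 1 := by
      intro k
      induction k with
      | zero => simp
      | succ k ihk =>
        obtain ⟨hk1, hk2⟩ := ihk
        constructor
        · rw [Function.iterate_succ_apply']
          have := le_gfun j (q^[k] 1)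
          simp only [hq]
          omega
        · rw [Function.iterate_succ_apply', Function.iterate_succ_apply']
          calc h (h^[k] 1) ≤ h (q^[k] 1) := A_mono (j+1) _ _ (hiter1 k) hk2
            _ ≤ gfun j (q^[k] 1) := ih _ hk1
            _ ≤ q (q^[k] 1) := by simp only [hq]; omega
    have hg1 : gfun (j+1) a = Efun (gfun j) (a-1) 1 := by rw [gfun]
    rw [hg1, Efun_eq_iter]
    obtain ⟨hk1, hk2⟩ := key (a-1)
    have step1 : h (h^[a-1] 1) ≤ gfun j ((fun x => gfun j x + 2)^[a-1] 1) := by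
      calc h (h^[a-1] 1) ≤ h (q^[a-1] 1) := A_mono (j+1) _ _ (hiter1 (a-1)) hk2
        _ ≤ gfun j (q^[a-1] 1) := ih _ hk1
        _ = gfun j ((fun x => gfun j x + 2)^[a-1] 1) := by rw [hq]
    have step2 : A (j+2) a ≤ h (h^[a-1] 1) := by
      have h1 : h 1 = 2 := A_one (j+1)
      have he : A (j+2) a = h^[a-1] 2 := by
        have := A_eq_iter j (a-1)
        rwa [show a - 1 + 1 = a from by omega] at this
      rw [he, ← h1, ← Function.iterate_succ_apply, Function.iterate_succ_apply']
    exact le_trans step2 step1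

-- ===== invAck facts =====

lemma invAck_upper (m : ℕ) : m ≤ ackFn (invAck m) := by
  have hne : {t | m ≤ ackFn t}.Nonempty := by
    rcases Nat.eq_zero_or_pos m with h | h
    · exact ⟨0, by simp [h]⟩
    · exact ⟨m, self_le_ackFn m h⟩
  exact Nat.sInf_mem hne

lemma invAck_pos (m : ℕ) (hm : 1 ≤ m) : 1 ≤ invAck m := by
  by_contra h
  have h0 : invAck m = 0 := by omega
  have := invAck_upper m
  rw [h0, ackFn_zero] at this
  omega

lemma invAck_lower (m : ℕ) (hm : 1 ≤ m) : ackFn (invAck m - 1) < m := by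
  have hpos := invAck_pos m hm
  have := Nat.notMem_of_lt_sInf (s := {t | m ≤ ackFn t})
    (show invAck m - 1 < invAck m from by omega)
  simp only [Set.mem_setOf_eq, not_le] at this
  exact this

lemma invAck_mono (m m' : ℕ) (h : m ≤ m') : invAck m ≤ invAck m' :=
  Nat.sInf_le (le_trans h (invAck_upper m'))

lemma reach (t : ℕ) (ht : 1 ≤ t) :
    ackFn t ≤ gfun (t-1) (ackFn (t-1) + 1) := by
  have ha : 1 ≤ ackFn (t-1) + 1 := by omega
  have h1 : A t (ackFn (t-1) + 1) ≤ gfun (t-1) (ackFn (t-1) + 1) := by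
    have := gfun_ge_A (t-1) (ackFn (t-1) + 1) ha
    rwa [show t - 1 + 1 = t from by omega] at this
  have htle : t ≤ ackFn (t-1) + 1 := by
    rcases Nat.lt_or_ge t 2 with h | h
    · omega
    · have := two_mul_le_A (t-1) (t-1) (by omega)
      unfold ackFn
      omega
  have h2 : A t t ≤ A t (ackFn (t-1) + 1) := A_mono t t _ ht htle
  exact le_trans h2 h1


/-- **Theorem.** There is a `c > 0` and a size-indexing Sperner family `(Q m)_{m ≥ 1}` whose
alphabet size grows only as the cube of the inverse-Ackermann function: `Q m` has exactly `m`
elements, all lying in `{1, …, c · α⁻¹(m)³}`, and for all `m ≠ m'` the multiset `Q m` is not a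
sub-multiset of `Q m'`. -/
theorem sperner_size_indexing :
    ∃ c : ℕ, 0 < c ∧
      ∃ Q : ℕ → Multiset ℕ,
        (∀ m, 1 ≤ m → (Q m).card = m ∧ ∀ x ∈ Q m, x ∈ Finset.Icc 1 (c * invAck m ^ 3)) ∧
        (∀ m m', 1 ≤ m → 1 ≤ m' → m ≠ m' → ¬ Q m ≤ Q m') := by
  classical
  refine ⟨4, by norm_num, ?_⟩
  have main : ∀ t : ℕ, ∃ F : ℕ → Multiset ℕ, 1 ≤ t →
      GoodFam (t*t) (t+1) (ackFn (t-1) + 1) (gfun (t-1) (ackFn (t-1) + 1)) F := by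
    intro t
    by_cases ht : 1 ≤ t
    · obtain ⟨F, hF⟩ := levelFam (t-1) (t*t) (ackFn (t-1) + 1) (by omega)
      have h : t - 1 + 2 = t + 1 := by omega
      rw [h] at hF
      exact ⟨F, fun _ => hF⟩
    · exact ⟨fun _ => 0, fun h => absurd h ht⟩
  choose G hG using main
  have hQrange : ∀ m, 1 ≤ m →
      ackFn (invAck m - 1) + 1 ≤ m ∧ m ≤ gfun (invAck m - 1) (ackFn (invAck m - 1) + 1) := by
    intro m hm
    constructor
    · have := invAck_lower m hm; omega
    · exact le_trans (invAck_upper m) (reach (invAck m) (invAck_pos m hm))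
  refine ⟨fun m => G (invAck m) m, ?_, ?_⟩
  · intro m hm
    have ht := invAck_pos m hm
    obtain ⟨hr1, hr2⟩ := hQrange m hm
    obtain ⟨hc, hw⟩ := (hG (invAck m) ht).1 m hr1 hr2
    refine ⟨hc, fun x hx => ?_⟩
    obtain ⟨h1, h2⟩ := hw x hx
    rw [Finset.mem_Icc]
    refine ⟨by omega, ?_⟩
    have hx2 : x ≤ invAck m * invAck m + (invAck m + 1) := h2
    have ht3 : invAck m * invAck m * invAck m ≥ invAck m * invAck m :=
      Nat.le_mul_of_pos_right _ (by omega)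
    have ht2 : invAck m * invAck m ≥ invAck m := Nat.le_mul_of_pos_right _ (by omega)
    calc x ≤ invAck m * invAck m + invAck m + 1 := by omega
      _ ≤ 4 * (invAck m * invAck m * invAck m) := by omega
      _ = 4 * invAck m ^ 3 := by ring
  · intro m m' hm hm' hne hle
    simp only at hle
    have ht := invAck_pos m hm
    have ht' := invAck_pos m' hm'
    obtain ⟨hr1, hr2⟩ := hQrange m hm
    obtain ⟨hr1', hr2'⟩ := hQrange m' hm'
    rcases lt_trichotomy m m' with h | h | h
    · have hmono : invAck m ≤ invAck m' := invAck_mono m m' (by omega)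
      rcases eq_or_lt_of_le hmono with heq | hlt
      · rw [heq] at hle hr1
        exact (hG (invAck m') ht').2 m m' hr1 h hr2' hle
      · obtain ⟨hc, hw⟩ := (hG (invAck m) ht).1 m hr1 hr2
        obtain ⟨hc', hw'⟩ := (hG (invAck m') ht').1 m' hr1' hr2'
        have hpos : 0 < (G (invAck m) m).card := by rw [hc]; omega
        obtain ⟨x, hx⟩ := Multiset.card_pos_iff_exists_mem.1 hpos
        obtain ⟨hx1, hx1'⟩ := hw x hx
        have hx2 : x ∈ G (invAck m') m' := Multiset.mem_of_le hle hx
        obtain ⟨hx3, _⟩ := hw' x hx2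
        have hsq : (invAck m + 1) * (invAck m + 1) ≤ invAck m' * invAck m' :=
          Nat.mul_le_mul (by omega) (by omega)
        have he : (invAck m + 1) * (invAck m + 1) =
            invAck m * invAck m + 2 * invAck m + 1 := by ring
        omega
    · exact hne h
    · have hcard := Multiset.card_le_card hle
      obtain ⟨hc, _⟩ := (hG (invAck m) ht).1 m hr1 hr2
      obtain ⟨hc', _⟩ := (hG (invAck m') ht').1 m' hr1' hr2'
      rw [hc, hc'] at hcard
      omega
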